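/- Let Ω = (0,1) with its Borel σ-field and Lebesgue (probability) measure P, and let C = {f ∈ L0+ : E_P[f] = 1}. Then the topological boundary of C in L0+ (with the topology of convergence in probability) equals the closure of C, namely {f ∈ L0+ : E_P[f] ≤ 1}. -/

import Mathlib

open MeasureTheory Filter Set

noncomputable section

variable {Ω : Type*} [MeasurableSpace Ω]

/-- The nonnegative orthant `L⁰₊` of the space `L⁰` of (a.e.-equivalence classes of)
random variables over `(Ω, ℱ, P)`. -/
def L0plus (P : Measure Ω) : Set (Ω →ₘ[P] ℝ) := {f | 0 ≤ f}

/-- The metric `(f, g) ↦ E[1 ∧ |f - g|]` inducing the topology of convergence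
in probability on `L⁰`. -/
def dist0 (P : Measure Ω) (f g : Ω →ₘ[P] ℝ) : ℝ :=
  ∫ ω, min 1 |f ω - g ω| ∂P

/-- Convergence in probability of a sequence in `L⁰`. -/
def Tendsto0 (P : Measure Ω) (f : ℕ → Ω →ₘ[P] ℝ) (g : Ω →ₘ[P] ℝ) : Prop :=
  Tendsto (fun n => dist0 P (f n) g) atTop (nhds 0)

/-- Closure of a set in `L⁰` with respect to the topology of convergence in probability. -/
def closure0 (P : Measure Ω) (C : Set (Ω →ₘ[P] ℝ)) : Set (Ω →ₘ[P] ℝ) :=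
  {f | ∀ ε : ℝ, 0 < ε → ∃ g ∈ C, dist0 P f g < ε}

/-- A set of `L⁰` is closed iff it contains its closure. -/
def IsClosed0 (P : Measure Ω) (C : Set (Ω →ₘ[P] ℝ)) : Prop :=
  closure0 P C ⊆ C

/-- Boundedness (in probability) of a set `C ⊆ L⁰₊` : `lim_{ℓ → ∞} sup_{f ∈ C} P[f > ℓ] = 0`. -/
def Bounded0 (P : Measure Ω) (C : Set (Ω →ₘ[P] ℝ)) : Prop :=
  Tendsto (fun ℓ : ℝ => ⨆ f ∈ C, P {ω | ℓ < f ω}) atTop (nhds 0)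

/-- The set `C^max` of maximal elements of `C ⊆ L⁰₊` : `f ∈ C` such that `f ≤ g` a.s.
and `g ∈ C` imply `f = g` a.s. -/
def maxSet (P : Measure Ω) (C : Set (Ω →ₘ[P] ℝ)) : Set (Ω →ₘ[P] ℝ) :=
  {f | f ∈ C ∧ ∀ g ∈ C, f ≤ g → f = g}

/-- `C` is max-closed if every maximal element of its closure already belongs to `C`. -/
def MaxClosed (P : Measure Ω) (C : Set (Ω →ₘ[P] ℝ)) : Prop :=
  maxSet P (closure0 P C) ⊆ C

/-- The pairing `⟨μ, f⟩ = ∫ f dμ ∈ [0, ∞]` between a nonnegative measure `μ` and `f ∈ L⁰₊`. -/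
def pairing {P : Measure Ω} (μ : Measure Ω) (f : Ω →ₘ[P] ℝ) : ENNReal :=
  ∫⁻ ω, ENNReal.ofReal (f ω) ∂μ

/-- The set `C^osp` of outer support points of `C ⊆ L⁰₊`: points `g ∈ C^max` for which there
is a σ-finite nonnegative measure `μ ≪ P` with `0 < sup_{f ∈ C} ⟨μ, f⟩ = ⟨μ, g⟩ < ∞`;
by convention `{0}^osp = {0}`. -/
def osp (P : Measure Ω) (C : Set (Ω →ₘ[P] ℝ)) : Set (Ω →ₘ[P] ℝ) :=
  {g | g ∈ maxSet P C ∧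
    (C = {0} ∨ ∃ μ : Measure Ω, μ ≪ P ∧ SigmaFinite μ ∧
      0 < pairing μ g ∧ pairing μ g < ⊤ ∧ (⨆ f ∈ C, pairing μ f) = pairing μ g)}

/-- The solid hull of `C ⊆ L⁰₊`. -/
def solidHull (P : Measure Ω) (C : Set (Ω →ₘ[P] ℝ)) : Set (Ω →ₘ[P] ℝ) :=
  {f | f ∈ L0plus P ∧ ∃ g ∈ C, f ≤ g}

/-- A set `S ⊆ L⁰₊` is solid if `g ∈ S` and `0 ≤ f ≤ g` imply `f ∈ S`. -/
def Solid (P : Measure Ω) (S : Set (Ω →ₘ[P] ℝ)) : Prop :=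
  ∀ g ∈ S, ∀ f : Ω →ₘ[P] ℝ, 0 ≤ f → f ≤ g → f ∈ S

/-- `(g n)` is a sequence of forward convex combinations of `(f n)`. -/
def ForwardConvexComb (P : Measure Ω) (f g : ℕ → Ω →ₘ[P] ℝ) : Prop :=
  ∀ n : ℕ, g n ∈ convexHull ℝ (f '' Set.Ici n)

end

noncomputable section

/-- The probability space `Ω = (0,1)` with its Borel σ-field and Lebesgue measure. -/
abbrev Omega01 : Type := Set.Ioo (0:ℝ) 1

/-- Lebesgue measure on `(0,1)`, a probability measure. -/
noncomputable def P01 : Measure Omega01 :=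
  (volume : Measure ℝ).comap Subtype.val

/-- The set `C = {f ∈ L⁰₊ : E_P[f] = 1}`. -/
noncomputable def C01 : Set (Omega01 →ₘ[P01] ℝ) :=
  {f | f ∈ L0plus P01 ∧ ∫⁻ ω, ENNReal.ofReal (f ω) ∂P01 = 1}

end

/-- The topological boundary of `C` relative to the subspace `L⁰₊` of `L⁰` (with the
topology of convergence in probability): points of `L⁰₊` lying both in the closure of `C`
and in the closure of `L⁰₊ \\ C`. -/
noncomputable def frontier01 : Set (Omega01 →ₘ[P01] ℝ) :=
  (L0plus P01 ∩ closure0 P01 C01) ∩ closure0 P01 (L0plus P01 \ C01)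

namespace St13
open ENNReal

lemma mE : MeasurableEmbedding ((↑) : Omega01 → ℝ) :=
  MeasurableEmbedding.subtype_coe measurableSet_Ioo

lemma P01_apply (s : Set Omega01) : P01 s = volume (Subtype.val '' s) :=
  mE.comap_apply _ _

instance : IsProbabilityMeasure P01 := by
  constructor
  rw [P01_apply, Subtype.coe_image_univ]
  simp [Real.volume_Ioo]

/-- small set of measure δ -/
def Aset (δ : ℝ) : Set Omega01 := {ω | (ω : ℝ) < δ}

lemma Aset_meas (δ : ℝ) : MeasurableSet (Aset δ) :=
  measurable_subtype_coe measurableSet_Iio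

lemma Aset_measure {δ : ℝ} (h0 : 0 < δ) (h1 : δ ≤ 1) : P01 (Aset δ) = ENNReal.ofReal δ := by
  rw [P01_apply]
  have himg : Subtype.val '' (Aset δ) = Set.Ioo 0 δ := by
    ext x
    constructor
    · rintro ⟨⟨y, hy⟩, hlt, rfl⟩
      exact ⟨hy.1, hlt⟩
    · rintro ⟨hx0, hxδ⟩
      exact ⟨⟨x, hx0, lt_of_lt_of_le hxδ h1⟩, hxδ, rfl⟩
  rw [himg, Real.volume_Ioo, sub_zero]

/-- perturbation of `f` by `c · 1_{Aset δ}` -/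
noncomputable def pert (f : Omega01 →ₘ[P01] ℝ) (δ c : ℝ) : Omega01 →ₘ[P01] ℝ :=
  f + AEEqFun.mk ((Aset δ).indicator fun _ => c)
    ((measurable_const.indicator (Aset_meas δ)).aestronglyMeasurable)

lemma pert_coe (f : Omega01 →ₘ[P01] ℝ) (δ c : ℝ) :
    ⇑(pert f δ c) =ᵐ[P01] fun ω => f ω + (Aset δ).indicator (fun _ => c) ω := by
  filter_upwards [AEEqFun.coeFn_add f (AEEqFun.mk ((Aset δ).indicator fun _ => c)
      ((measurable_const.indicator (Aset_meas δ)).aestronglyMeasurable)),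
    AEEqFun.coeFn_mk ((Aset δ).indicator fun _ => c)
      ((measurable_const.indicator (Aset_meas δ)).aestronglyMeasurable)] with ω h1 h2
  simp only [pert, h1, Pi.add_apply, h2]

lemma pert_nonneg {f : Omega01 →ₘ[P01] ℝ} (hf : 0 ≤ f) {δ c : ℝ} (hc : 0 ≤ c) :
    0 ≤ pert f δ c := by
  rw [← AEEqFun.coeFn_le] at hf ⊢
  filter_upwards [hf, pert_coe f δ c, AEEqFun.coeFn_zero (β := ℝ) (μ := P01)] with ω h1 h2 h3
  have h1' : (0:ℝ) ≤ f ω := by simpa [h3] using h1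
  have hind : 0 ≤ (Aset δ).indicator (fun _ => c) ω := Set.indicator_nonneg (fun _ _ => hc) ω
  rw [h3, h2]
  simp only [Pi.zero_apply]
  linarith

lemma pert_lintegral {f : Omega01 →ₘ[P01] ℝ} (hf : 0 ≤ f) {δ c : ℝ} (hc : 0 ≤ c) :
    ∫⁻ ω, ENNReal.ofReal (pert f δ c ω) ∂P01
      = (∫⁻ ω, ENNReal.ofReal (f ω) ∂P01) + ENNReal.ofReal c * P01 (Aset δ) := by
  rw [← AEEqFun.coeFn_le] at hf
  have hcongr : (fun ω => ENNReal.ofReal (pert f δ c ω))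
      =ᵐ[P01] fun ω => ENNReal.ofReal (f ω)
        + (Aset δ).indicator (fun _ => ENNReal.ofReal c) ω := by
    filter_upwards [hf, pert_coe f δ c, AEEqFun.coeFn_zero (β := ℝ) (μ := P01)] with ω h1 h2 h3
    have h1' : (0:ℝ) ≤ f ω := by simpa [h3] using h1
    rw [h2]
    by_cases h : ω ∈ Aset δ <;>
      simp [h, ENNReal.ofReal_add h1' hc]
  rw [lintegral_congr_ae hcongr,
    lintegral_add_right' _ ((measurable_const.indicator (Aset_meas δ)).aemeasurable),
    lintegral_indicator (Aset_meas δ), setLIntegral_const]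

lemma pert_dist {f : Omega01 →ₘ[P01] ℝ} {δ c : ℝ} (hc : 0 ≤ c) (h0 : 0 < δ) (h1 : δ ≤ 1) :
    dist0 P01 f (pert f δ c) ≤ δ := by
  have hcongr : (fun ω => min 1 |f ω - pert f δ c ω|)
      =ᵐ[P01] (Aset δ).indicator (fun _ => min 1 c) := by
    filter_upwards [pert_coe f δ c] with ω h2
    rw [h2]
    by_cases h : ω ∈ Aset δ <;> simp [h, abs_of_nonneg hc]
  rw [dist0, integral_congr_ae hcongr, integral_indicator (Aset_meas δ), setIntegral_const, measureReal_def,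
    Aset_measure h0 h1, ENNReal.toReal_ofReal h0.le, smul_eq_mul]
  calc δ * min 1 c ≤ δ * 1 := by
        apply mul_le_mul_of_nonneg_left (min_le_left _ _) h0.le
    _ = δ := mul_one δ


lemma toReal_le_one {I : ℝ≥0∞} (hI : I ≤ 1) : I.toReal ≤ 1 := by
  have := ENNReal.toReal_mono (by simp) hI
  simpa using this

lemma subset_closure0 {f : Omega01 →ₘ[P01] ℝ} (hf : f ∈ L0plus P01)
    (hI : ∫⁻ ω, ENNReal.ofReal (f ω) ∂P01 ≤ 1) : f ∈ closure0 P01 C01 := by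
  intro ε hε
  set I := ∫⁻ ω, ENNReal.ofReal (f ω) ∂P01 with hIdef
  have hItop : I ≠ ⊤ := (lt_of_le_of_lt hI ENNReal.one_lt_top).ne
  set δ := min (ε/2) (1/2) with hδ
  have hδ0 : 0 < δ := lt_min (by linarith) (by norm_num)
  have hδ1 : δ ≤ 1 := le_trans (min_le_right _ _) (by norm_num)
  have hδε : δ < ε := lt_of_le_of_lt (min_le_left _ _) (by linarith)
  set c := (1 - I.toReal)/δ with hc
  have hIle1 : I.toReal ≤ 1 := toReal_le_one hI
  have hc0 : 0 ≤ c := div_nonneg (by linarith) hδ0.le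
  refine ⟨pert f δ c, ⟨pert_nonneg hf hc0, ?_⟩, lt_of_le_of_lt (pert_dist hc0 hδ0 hδ1) hδε⟩
  rw [pert_lintegral hf hc0, Aset_measure hδ0 hδ1, ← ENNReal.ofReal_mul hc0, hc,
    div_mul_cancel₀ _ hδ0.ne']
  calc I + ENNReal.ofReal (1 - I.toReal)
      = ENNReal.ofReal I.toReal + ENNReal.ofReal (1 - I.toReal) := by
        rw [ENNReal.ofReal_toReal hItop]
    _ = ENNReal.ofReal 1 := by
        rw [← ENNReal.ofReal_add ENNReal.toReal_nonneg (by linarith)]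
        ring_nf
    _ = 1 := ENNReal.ofReal_one

lemma mem_closure_diff {f : Omega01 →ₘ[P01] ℝ} (hf : f ∈ L0plus P01)
    (hI : ∫⁻ ω, ENNReal.ofReal (f ω) ∂P01 ≤ 1) :
    f ∈ closure0 P01 (L0plus P01 \ C01) := by
  intro ε hε
  set δ := min (ε/2) (1/2) with hδ
  have hδ0 : 0 < δ := lt_min (by linarith) (by norm_num)
  have hδ1 : δ ≤ 1 := le_trans (min_le_right _ _) (by norm_num)
  have hδε : δ < ε := lt_of_le_of_lt (min_le_left _ _) (by linarith)
  set c := 3/δ with hc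
  have hc0 : 0 ≤ c := div_nonneg (by norm_num) hδ0.le
  refine ⟨pert f δ c, ⟨pert_nonneg hf hc0, ?_⟩,
    lt_of_le_of_lt (pert_dist hc0 hδ0 hδ1) hδε⟩
  intro hmem
  have hval : ∫⁻ ω, ENNReal.ofReal (pert f δ c ω) ∂P01
      = (∫⁻ ω, ENNReal.ofReal (f ω) ∂P01) + ENNReal.ofReal 3 := by
    rw [pert_lintegral hf hc0, Aset_measure hδ0 hδ1, ← ENNReal.ofReal_mul hc0, hc,
      div_mul_cancel₀ _ hδ0.ne']
  have h3 : (3:ℝ≥0∞) ≤ ∫⁻ ω, ENNReal.ofReal (pert f δ c ω) ∂P01 := by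
    rw [hval]
    have : ENNReal.ofReal 3 = (3:ℝ≥0∞) := by norm_num
    rw [this]
    exact le_add_self
  rw [hmem.2] at h3
  norm_num at h3

lemma int_min_one (u : Omega01 → ℝ) (hu : AEStronglyMeasurable u P01) :
    Integrable (fun ω => min 1 |u ω|) P01 := by
  have hm : AEStronglyMeasurable (fun ω => min 1 |u ω|) P01 :=
    (continuous_const.min continuous_abs).comp_aestronglyMeasurable hu
  refine Integrable.mono' (integrable_const (1:ℝ)) hm (ae_of_all _ fun ω => ?_)
  rw [Real.norm_eq_abs, abs_of_nonneg (le_min zero_le_one (abs_nonneg _))]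
  exact min_le_left _ _

lemma closure0_subset :
    closure0 P01 C01 ⊆ {f | f ∈ L0plus P01 ∧ ∫⁻ ω, ENNReal.ofReal (f ω) ∂P01 ≤ 1} := by
  intro f hf
  constructor
  · -- nonnegativity
    set h : Omega01 → ℝ := fun ω => min 1 (max (-(f ω)) 0) with hh
    have hmeas : AEStronglyMeasurable h P01 := by
      exact (continuous_const.min (continuous_neg.max continuous_const)).comp_aestronglyMeasurable
        f.aestronglyMeasurable
    have hb0 : ∀ ω, 0 ≤ h ω := fun ω => le_min zero_le_one (le_max_right _ _)
    have hb1 : ∀ ω, h ω ≤ 1 := fun ω => min_le_left _ _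
    have hint : Integrable h P01 := by
      refine Integrable.mono' (integrable_const (1:ℝ)) hmeas (ae_of_all _ fun ω => ?_)
      rw [Real.norm_eq_abs, abs_of_nonneg (hb0 ω)]
      exact hb1 ω
    have key : ∀ ε : ℝ, 0 < ε → ∫ ω, h ω ∂P01 < ε := by
      intro ε hε
      obtain ⟨g, hgC, hdist⟩ := hf ε hε
      have hg0 : (0 : Omega01 →ₘ[P01] ℝ) ≤ g := hgC.1
      rw [← AEEqFun.coeFn_le] at hg0
      have hle : ∀ᵐ ω ∂P01, h ω ≤ min 1 |f ω - g ω| := by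
        filter_upwards [hg0, AEEqFun.coeFn_zero (β := ℝ) (μ := P01)] with ω h1 h2
        have hg0' : 0 ≤ g ω := by simpa [h2] using h1
        rcases le_or_gt 0 (f ω) with hcase | hcase
        · have : h ω = 0 := by
            simp only [hh]
            rw [max_eq_right (by linarith), min_eq_right zero_le_one]
          rw [this]
          exact le_min zero_le_one (abs_nonneg _)
        · have hmax : max (-(f ω)) 0 = -(f ω) := max_eq_left (by linarith)
          have habs : -(f ω) ≤ |f ω - g ω| := by
            rw [abs_sub_comm]
            calc -(f ω) ≤ g ω - f ω := by linarith
              _ ≤ |g ω - f ω| := le_abs_self _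
          simp only [hh, hmax]
          exact min_le_min le_rfl habs
      have hint2 : Integrable (fun ω => min 1 |f ω - g ω|) P01 :=
        int_min_one _ (f.aestronglyMeasurable.sub g.aestronglyMeasurable)
      calc ∫ ω, h ω ∂P01 ≤ ∫ ω, min 1 |f ω - g ω| ∂P01 := integral_mono_ae hint hint2 hle
        _ < ε := hdist
    have hle0 : ∫ ω, h ω ∂P01 ≤ 0 := by
      by_contra hcon
      push_neg at hcon
      exact lt_irrefl _ (key _ hcon)
    have hzero : ∫ ω, h ω ∂P01 = 0 :=
      le_antisymm hle0 (integral_nonneg hb0)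
    have hae : h =ᵐ[P01] 0 :=
      (integral_eq_zero_iff_of_nonneg_ae (ae_of_all _ hb0) hint).mp hzero
    show (0 : Omega01 →ₘ[P01] ℝ) ≤ f
    rw [← AEEqFun.coeFn_le]
    filter_upwards [hae, AEEqFun.coeFn_zero (β := ℝ) (μ := P01)] with ω h1 h2
    rw [h2]
    simp only [Pi.zero_apply]
    by_contra hcon
    push_neg at hcon
    have hpos : 0 < h ω := lt_min one_pos (lt_max_iff.mpr (Or.inl (by linarith)))
    rw [h1] at hpos
    simp at hpos
  · -- integral bound
    have hfa : AEMeasurable (⇑f) P01 := f.aemeasurable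
    set F := hfa.mk with hFdef
    have hFmeas : Measurable F := hfa.measurable_mk
    have hFf : ⇑f =ᵐ[P01] F := hfa.ae_eq_mk
    have congr1 : ∫⁻ ω, ENNReal.ofReal (f ω) ∂P01 = ∫⁻ ω, ENNReal.ofReal (F ω) ∂P01 :=
      lintegral_congr_ae (hFf.mono fun ω hω => congrArg ENNReal.ofReal hω)
    rw [congr1]
    have htrunc : ∀ n : ℕ, ∫⁻ ω, min (ENNReal.ofReal (F ω)) n ∂P01 ≤ 1 := by
      intro n
      refine ENNReal.le_of_forall_pos_le_add fun η hη h1top => ?_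
      set ε := min ((η:ℝ) / (n+1)) (1/2) with hεdef
      have hη0 : (0:ℝ) < η := hη
      have hε0 : 0 < ε := lt_min (by positivity) (by norm_num)
      have hε1 : ε ≤ 1 := le_trans (min_le_right _ _) (by norm_num)
      obtain ⟨g, hgC, hdist⟩ := hf (ε^2) (by positivity)
      have hga : AEMeasurable (⇑g) P01 := g.aemeasurable
      set G := hga.mk with hGdef
      have hGmeas : Measurable G := hga.measurable_mk
      have hGg : ⇑g =ᵐ[P01] G := hga.ae_eq_mk
      set B := {ω : Omega01 | ε < |F ω - G ω|} with hBdef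
      have hBmeas : MeasurableSet B :=
        measurableSet_lt measurable_const (hFmeas.sub hGmeas).abs
      set D := ∫⁻ ω, ENNReal.ofReal (min 1 |F ω - G ω|) ∂P01 with hDdef
      have hD1 : D ≤ 1 := by
        calc D ≤ ∫⁻ _, (1:ℝ≥0∞) ∂P01 := by
              apply lintegral_mono fun ω => ?_
              exact ENNReal.ofReal_le_one.mpr (min_le_left _ _)
          _ = 1 := by simp
      have hDtop : D ≠ ⊤ := (lt_of_le_of_lt hD1 ENNReal.one_lt_top).ne
      have hDval : dist0 P01 f g = D.toReal := by
        have hcg : (fun ω => min 1 |f ω - g ω|) =ᵐ[P01] fun ω => min 1 |F ω - G ω| := by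
          filter_upwards [hFf, hGg] with ω h1 h2
          rw [h1, h2]
        rw [dist0, integral_congr_ae hcg]
        exact integral_eq_lintegral_of_nonneg_ae
          (ae_of_all _ fun ω => le_min zero_le_one (abs_nonneg _))
          ((continuous_const.min continuous_abs).comp_aestronglyMeasurable
            ((hFmeas.sub hGmeas).aestronglyMeasurable))
      have hDlt : D ≤ ENNReal.ofReal (ε^2) := by
        rw [hDval] at hdist
        exact ((ENNReal.lt_ofReal_iff_toReal_lt hDtop).mpr hdist).le
      have hPB : P01 B ≤ ENNReal.ofReal ε := by
        have hsub : B ⊆ {ω : Omega01 |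
            ENNReal.ofReal ε ≤ ENNReal.ofReal (min 1 |F ω - G ω|)} := by
          intro ω hω
          exact ENNReal.ofReal_le_ofReal (le_min hε1 (le_of_lt hω))
        have hmark := mul_meas_ge_le_lintegral₀
          (μ := P01) (f := fun ω => ENNReal.ofReal (min 1 |F ω - G ω|))
          ((measurable_const.min (hFmeas.sub hGmeas).abs).ennreal_ofReal).aemeasurable
          (ENNReal.ofReal ε)
        have hchain : ENNReal.ofReal ε * P01 B ≤ ENNReal.ofReal ε * ENNReal.ofReal ε := by
          calc ENNReal.ofReal ε * P01 B
              ≤ ENNReal.ofReal ε * P01 {ω : Omega01 |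
                ENNReal.ofReal ε ≤ ENNReal.ofReal (min 1 |F ω - G ω|)} :=
                mul_le_mul_right (measure_mono hsub) _
            _ ≤ D := hmark
            _ ≤ ENNReal.ofReal (ε^2) := hDlt
            _ = ENNReal.ofReal ε * ENNReal.ofReal ε := by
                rw [← ENNReal.ofReal_mul hε0.le, sq]
        exact (ENNReal.mul_le_mul_iff_right (ENNReal.ofReal_pos.mpr hε0).ne' ENNReal.ofReal_ne_top).mp
          hchain
      have hpt : ∀ ω, min (ENNReal.ofReal (F ω)) n
          ≤ min (ENNReal.ofReal (G ω)) n + ENNReal.ofReal ε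
            + B.indicator (fun _ => (n:ℝ≥0∞)) ω := by
        intro ω
        by_cases hω : ω ∈ B
        · rw [Set.indicator_of_mem hω]
          calc min (ENNReal.ofReal (F ω)) n ≤ (n:ℝ≥0∞) := min_le_right _ _
            _ ≤ _ := le_add_self
        · rw [Set.indicator_of_notMem hω, add_zero]
          have hle : |F ω - G ω| ≤ ε := not_lt.mp hω
          have hFG : F ω ≤ G ω + ε := by
            have := (abs_le.mp hle).2
            linarith
          have h2 : ENNReal.ofReal (F ω) ≤ ENNReal.ofReal (G ω) + ENNReal.ofReal ε :=
            (ENNReal.ofReal_le_ofReal hFG).trans ENNReal.ofReal_add_le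
          rcases le_total (ENNReal.ofReal (G ω)) (n:ℝ≥0∞) with hc | hc
          · rw [min_eq_left hc]
            exact le_trans (min_le_left _ _) h2
          · rw [min_eq_right hc]
            exact le_trans (min_le_right _ _) le_self_add
      have hint1 : ∫⁻ ω, min (ENNReal.ofReal (F ω)) n ∂P01
          ≤ (∫⁻ ω, min (ENNReal.ofReal (G ω)) n ∂P01) + ENNReal.ofReal ε
            + (n:ℝ≥0∞) * P01 B := by
        calc ∫⁻ ω, min (ENNReal.ofReal (F ω)) n ∂P01
            ≤ ∫⁻ ω, (min (ENNReal.ofReal (G ω)) n + ENNReal.ofReal ε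
              + B.indicator (fun _ => (n:ℝ≥0∞)) ω) ∂P01 := lintegral_mono hpt
          _ = (∫⁻ ω, (min (ENNReal.ofReal (G ω)) n + ENNReal.ofReal ε) ∂P01)
              + ∫⁻ ω, B.indicator (fun _ => (n:ℝ≥0∞)) ω ∂P01 :=
              lintegral_add_right _ (measurable_const.indicator hBmeas)
          _ = (∫⁻ ω, min (ENNReal.ofReal (G ω)) n ∂P01) + ENNReal.ofReal ε
              + ∫⁻ ω, B.indicator (fun _ => (n:ℝ≥0∞)) ω ∂P01 := by
              rw [lintegral_add_right _ measurable_const, lintegral_const, measure_univ, mul_one]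
          _ = (∫⁻ ω, min (ENNReal.ofReal (G ω)) n ∂P01) + ENNReal.ofReal ε
              + (n:ℝ≥0∞) * P01 B := by
              rw [lintegral_indicator hBmeas, setLIntegral_const]
      have hG1 : ∫⁻ ω, min (ENNReal.ofReal (G ω)) n ∂P01 ≤ 1 := by
        have hgint : ∫⁻ ω, ENNReal.ofReal (G ω) ∂P01 = 1 :=
          (lintegral_congr_ae (hGg.mono fun ω hω => congrArg ENNReal.ofReal hω)).symm.trans hgC.2
        calc ∫⁻ ω, min (ENNReal.ofReal (G ω)) n ∂P01
            ≤ ∫⁻ ω, ENNReal.ofReal (G ω) ∂P01 := lintegral_mono fun ω => min_le_left _ _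
          _ = 1 := hgint
      have hεη : ENNReal.ofReal ε + (n:ℝ≥0∞) * ENNReal.ofReal ε ≤ (η:ℝ≥0∞) := by
        have hcoe : (η:ℝ≥0∞) = ENNReal.ofReal (η:ℝ) := ENNReal.ofReal_coe_nnreal.symm
        rw [hcoe, ← ENNReal.ofReal_natCast n, ← ENNReal.ofReal_mul (by positivity),
          ← ENNReal.ofReal_add hε0.le (by positivity)]
        apply ENNReal.ofReal_le_ofReal
        have hεb : ε ≤ (η:ℝ) / (n+1) := min_le_left _ _
        have hn1 : (0:ℝ) < n + 1 := by positivity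
        calc ε + (n:ℝ) * ε = (n+1) * ε := by ring
          _ ≤ (n+1) * ((η:ℝ)/(n+1)) := by
              apply mul_le_mul_of_nonneg_left hεb hn1.le
          _ = (η:ℝ) := by field_simp
      calc ∫⁻ ω, min (ENNReal.ofReal (F ω)) n ∂P01
          ≤ (∫⁻ ω, min (ENNReal.ofReal (G ω)) n ∂P01) + ENNReal.ofReal ε
            + (n:ℝ≥0∞) * P01 B := hint1
        _ ≤ 1 + ENNReal.ofReal ε + (n:ℝ≥0∞) * ENNReal.ofReal ε := by
            gcongr
        _ = 1 + (ENNReal.ofReal ε + (n:ℝ≥0∞) * ENNReal.ofReal ε) := by ring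
        _ ≤ 1 + (η:ℝ≥0∞) := by gcongr
    have hsup : ∀ ω, (⨆ n : ℕ, min (ENNReal.ofReal (F ω)) n) = ENNReal.ofReal (F ω) := by
      intro ω
      apply le_antisymm (iSup_le fun n => min_le_left _ _)
      obtain ⟨n, hn⟩ := ENNReal.exists_nat_gt (ENNReal.ofReal_ne_top (r := F ω))
      exact le_iSup_of_le n (le_of_eq (min_eq_left hn.le).symm)
    have hmeasn : ∀ n : ℕ, Measurable fun ω => min (ENNReal.ofReal (F ω)) (n:ℝ≥0∞) :=
      fun n => hFmeas.ennreal_ofReal.min measurable_const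
    have hmono : Monotone fun (n:ℕ) (ω : Omega01) => min (ENNReal.ofReal (F ω)) (n:ℝ≥0∞) := by
      intro m k hmk ω
      exact min_le_min le_rfl (by exact_mod_cast Nat.cast_le.mpr hmk)
    calc ∫⁻ ω, ENNReal.ofReal (F ω) ∂P01
        = ∫⁻ ω, ⨆ n : ℕ, min (ENNReal.ofReal (F ω)) n ∂P01 :=
          (lintegral_congr fun ω => (hsup ω).symm)
      _ = ⨆ n : ℕ, ∫⁻ ω, min (ENNReal.ofReal (F ω)) n ∂P01 := lintegral_iSup hmeasn hmono
      _ ≤ 1 := iSup_le htrunc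

end St13
/-- On `Ω = (0,1)` with Lebesgue measure `P`, for
`C = {f ∈ L⁰₊ : E_P[f] = 1}`, the topological boundary of `C` in `L⁰₊` equals the closure
of `C`, namely `{f ∈ L⁰₊ : E_P[f] ≤ 1}`. -/
theorem statement13 :
    frontier01 = closure0 P01 C01 ∧
      frontier01 = {f | f ∈ L0plus P01 ∧ ∫⁻ ω, ENNReal.ofReal (f ω) ∂P01 ≤ 1} := by
  have key1 : closure0 P01 C01 = {f | f ∈ L0plus P01 ∧ ∫⁻ ω, ENNReal.ofReal (f ω) ∂P01 ≤ 1} :=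
    Set.Subset.antisymm St13.closure0_subset (fun f hf => St13.subset_closure0 hf.1 hf.2)
  have key2 : closure0 P01 C01 ⊆ closure0 P01 (L0plus P01 \ C01) := fun f hf =>
    St13.mem_closure_diff (St13.closure0_subset hf).1 (St13.closure0_subset hf).2
  have hfront : frontier01 = closure0 P01 C01 := by
    apply Set.Subset.antisymm
    · intro f hf
      exact hf.1.2
    · intro f hf
      exact ⟨⟨(St13.closure0_subset hf).1, hf⟩, key2 hf⟩
  exact ⟨hfront, hfront.trans key1⟩
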